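/- Let ν ≥ 0, α > −1, and let (P_n)_{n∈ℕ₀} be a sequence of real polynomials with deg P_n = n satisfying the orthonormality ∫₀^∞ P_n(x) P_m(x) x^α ρ_ν(x) dx = δ_{n,m} for all n, m ∈ ℕ₀. Then for every n ∈ ℕ₀, ∫₀^∞ [P_n(x)]² x^α ρ_{ν+1}(x) dx = 2n + 1 + ν + α. -/

import Mathlib

open MeasureTheory Real Set Polynomial

/-- The scaled Macdonald function `ρ_ν(x) = ∫₀^∞ t^(ν-1) e^(-t - x/t) dt`. -/
noncomputable def rho (ν : ℝ) (x : ℝ) : ℝ :=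
  ∫ t in Ioi (0:ℝ), t ^ (ν - 1) * Real.exp (-t - x / t)

lemma rho_eq_aux (ν : ℝ) : rho ν = fun x =>
    ∫ t in Ioi (0:ℝ), Real.exp (Real.log t * (ν - 1)) * Real.exp (-t - x / t) := by
  funext x
  exact setIntegral_congr_fun measurableSet_Ioi fun t ht => by
    rw [Real.rpow_def_of_pos ht]

lemma meas_rho (ν : ℝ) : Measurable (rho ν) := by
  rw [rho_eq_aux]
  have hF : StronglyMeasurable (fun p : ℝ × ℝ =>
      Real.exp (Real.log p.2 * (ν - 1)) * Real.exp (-p.2 - p.1 / p.2)) := by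
    refine Measurable.stronglyMeasurable ?_
    exact ((Real.measurable_log.comp measurable_snd).mul measurable_const).exp.mul
      ((measurable_snd.neg.sub (measurable_fst.div measurable_snd)).exp)
  exact (hF.integral_prod_right').measurable

lemma rho_nonneg (ν x : ℝ) : 0 ≤ rho ν x := by
  apply setIntegral_nonneg measurableSet_Ioi
  intro t ht
  have : (0:ℝ) < t := ht
  positivity

lemma aesm_integrand (ν x : ℝ) :
    AEStronglyMeasurable (fun t : ℝ => t ^ (ν - 1) * Real.exp (-t - x / t))
      (volume.restrict (Ioi 0)) := by
  have hg : Measurable (fun t : ℝ => Real.exp (Real.log t * (ν - 1)) * Real.exp (-t - x / t)) :=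
    ((Real.measurable_log.mul measurable_const).exp).mul
      ((measurable_id.neg.sub (measurable_const.div measurable_id)).exp)
  refine hg.aestronglyMeasurable.congr ?_
  filter_upwards [self_mem_ae_restrict measurableSet_Ioi] with t ht
  rw [Real.rpow_def_of_pos ht]

lemma integrableOn_rho_integrand {ν x : ℝ} (hν : 0 ≤ ν) (hx : 0 < x) :
    IntegrableOn (fun t : ℝ => t ^ (ν - 1) * Real.exp (-t - x / t)) (Ioi 0) := by
  refine Integrable.mono'
    ((Real.GammaIntegral_convergent (by linarith : (0:ℝ) < ν + 1)).const_mul x⁻¹)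
    (aesm_integrand ν x) ?_
  filter_upwards [self_mem_ae_restrict measurableSet_Ioi] with t ht
  have ht0 : (0:ℝ) < t := ht
  rw [Real.norm_eq_abs, abs_of_nonneg (by positivity)]
  have h1 : Real.exp (-t - x / t) = Real.exp (-t) * Real.exp (-(x / t)) := by
    rw [← Real.exp_add]; ring_nf
  have h2 : Real.exp (-(x / t)) ≤ t / x := by
    rw [Real.exp_neg]
    have hxt : (0:ℝ) < x / t := by positivity
    have : x / t ≤ Real.exp (x / t) := by
      have := Real.add_one_le_exp (x / t); linarith
    calc (Real.exp (x / t))⁻¹ ≤ (x / t)⁻¹ := by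
          exact inv_anti₀ hxt this
      _ = t / x := by rw [inv_div]
  have h3 : t ^ (ν - 1) * t = t ^ (ν + 1 - 1) := by
    have : ν + 1 - 1 = (ν - 1) + 1 := by ring
    rw [this, Real.rpow_add_one ht0.ne']
  calc t ^ (ν - 1) * Real.exp (-t - x / t)
      = t ^ (ν - 1) * Real.exp (-t) * Real.exp (-(x / t)) := by rw [h1]; ring
    _ ≤ t ^ (ν - 1) * Real.exp (-t) * (t / x) := by
        apply mul_le_mul_of_nonneg_left h2 (by positivity)
    _ = x⁻¹ * (Real.exp (-t) * (t ^ (ν - 1) * t)) := by ring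
    _ = x⁻¹ * (Real.exp (-t) * t ^ (ν + 1 - 1)) := by rw [h3]

lemma moment_core {ν s : ℝ} (hν : 0 ≤ ν) (hs : 0 < s) :
    IntegrableOn (fun x : ℝ => x ^ (s - 1) * rho ν x) (Ioi 0) ∧
    ∫ x in Ioi (0:ℝ), x ^ (s - 1) * rho ν x = Real.Gamma s * Real.Gamma (s + ν) := by
  set μ := volume.restrict (Ioi (0:ℝ)) with hμ
  set g : ℝ → ℝ → ℝ := fun x t => x ^ (s - 1) * (t ^ (ν - 1) * Real.exp (-t - x / t)) with hg
  -- Step 2 : inner t-lintegral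
  have step2 : ∀ x ∈ Ioi (0:ℝ), (∫⁻ t, ENNReal.ofReal (g x t) ∂μ)
      = ENNReal.ofReal (x ^ (s - 1) * rho ν x) := by
    intro x hx
    have hx0 : (0:ℝ) < x := hx
    have hxp : 0 ≤ x ^ (s - 1) := Real.rpow_nonneg hx0.le _
    have h1 : ∀ t : ℝ, ENNReal.ofReal (g x t)
        = ENNReal.ofReal (x ^ (s - 1)) * ENNReal.ofReal (t ^ (ν - 1) * Real.exp (-t - x / t)) :=
      fun t => ENNReal.ofReal_mul hxp
    simp only [h1]
    rw [lintegral_const_mul' _ _ ENNReal.ofReal_ne_top]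
    have h2 : (∫⁻ t, ENNReal.ofReal (t ^ (ν - 1) * Real.exp (-t - x / t)) ∂μ)
        = ENNReal.ofReal (rho ν x) := by
      rw [← ofReal_integral_eq_lintegral_ofReal (integrableOn_rho_integrand hν hx0)]
      · rfl
      · filter_upwards [self_mem_ae_restrict measurableSet_Ioi] with t ht
        have : (0:ℝ) < t := ht
        positivity
    rw [h2, ← ENNReal.ofReal_mul hxp]
  -- Step 3 : inner x-lintegral
  have step3 : ∀ t ∈ Ioi (0:ℝ), (∫⁻ x, ENNReal.ofReal (g x t) ∂μ)
      = ENNReal.ofReal (Real.Gamma s * (Real.exp (-t) * t ^ (s + ν - 1))) := by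
    intro t ht
    have ht0 : (0:ℝ) < t := ht
    have hc : 0 ≤ t ^ (ν - 1) * Real.exp (-t) := by positivity
    have h1 : ∀ x : ℝ, ENNReal.ofReal (g x t)
        = ENNReal.ofReal (t ^ (ν - 1) * Real.exp (-t))
          * ENNReal.ofReal (x ^ (s - 1) * Real.exp (-(t⁻¹ * x))) := by
      intro x
      rw [← ENNReal.ofReal_mul hc]
      congr 1
      have : Real.exp (-t - x / t) = Real.exp (-t) * Real.exp (-(t⁻¹ * x)) := by
        rw [← Real.exp_add]
        congr 1
        rw [div_eq_inv_mul]; ring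
      rw [hg]; simp only []
      rw [this]; ring
    simp only [h1]
    rw [lintegral_const_mul' _ _ ENNReal.ofReal_ne_top]
    have hint : IntegrableOn (fun x : ℝ => x ^ (s - 1) * Real.exp (-(t⁻¹ * x))) (Ioi 0) := by
      have := integrableOn_rpow_mul_exp_neg_mul_rpow (p := 1) (s := s - 1) (b := t⁻¹)
        (by linarith) one_pos (inv_pos.mpr ht0)
      refine this.congr_fun (fun x hx => ?_) measurableSet_Ioi
      dsimp only
      rw [Real.rpow_one, neg_mul]
    have h2 : (∫⁻ x, ENNReal.ofReal (x ^ (s - 1) * Real.exp (-(t⁻¹ * x))) ∂μ)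
        = ENNReal.ofReal (t ^ s * Real.Gamma s) := by
      rw [← ofReal_integral_eq_lintegral_ofReal hint]
      · congr 1
        have h := Real.integral_rpow_mul_exp_neg_mul_Ioi hs (inv_pos.mpr ht0)
        rw [h, one_div, inv_inv]
      · filter_upwards [self_mem_ae_restrict measurableSet_Ioi] with x hx
        have : (0:ℝ) < x := hx
        positivity
    rw [h2, ← ENNReal.ofReal_mul hc]
    congr 1
    have h3 : t ^ (ν - 1) * t ^ s = t ^ (s + ν - 1) := by
      rw [← Real.rpow_add ht0]; ring_nf
    calc t ^ (ν - 1) * Real.exp (-t) * (t ^ s * Real.Gamma s)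
        = Real.Gamma s * (Real.exp (-t) * (t ^ (ν - 1) * t ^ s)) := by ring
      _ = Real.Gamma s * (Real.exp (-t) * t ^ (s + ν - 1)) := by rw [h3]
  -- Step 4 : outer t-lintegral
  have step4 : (∫⁻ t, ENNReal.ofReal (Real.Gamma s * (Real.exp (-t) * t ^ (s + ν - 1))) ∂μ)
      = ENNReal.ofReal (Real.Gamma s * Real.Gamma (s + ν)) := by
    have hint : IntegrableOn (fun t : ℝ => Real.Gamma s * (Real.exp (-t) * t ^ (s + ν - 1)))
        (Ioi 0) := (Real.GammaIntegral_convergent (by linarith : (0:ℝ) < s + ν)).const_mul _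
    rw [← ofReal_integral_eq_lintegral_ofReal hint]
    · congr 1
      rw [MeasureTheory.integral_const_mul]
      congr 1
      exact (Real.Gamma_eq_integral (by linarith : (0:ℝ) < s + ν)).symm
    · filter_upwards [self_mem_ae_restrict measurableSet_Ioi] with t ht
      have : (0:ℝ) < t := ht
      have := Real.Gamma_nonneg_of_nonneg hs.le
      positivity
  -- Tonelli swap
  have hgm : AEMeasurable (Function.uncurry fun x t => ENNReal.ofReal (g x t)) (μ.prod μ) := by
    have hrep : Measurable (fun p : ℝ × ℝ => ENNReal.ofReal
        (Real.exp (Real.log p.1 * (s - 1)) *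
          (Real.exp (Real.log p.2 * (ν - 1)) * Real.exp (-p.2 - p.1 / p.2)))) := by
      apply ENNReal.measurable_ofReal.comp
      exact (((Real.measurable_log.comp measurable_fst).mul measurable_const).exp).mul
        ((((Real.measurable_log.comp measurable_snd).mul measurable_const).exp).mul
          ((measurable_snd.neg.sub (measurable_fst.div measurable_snd)).exp))
    refine hrep.aemeasurable.congr ?_
    have hprod : μ.prod μ = (volume.prod volume).restrict ((Ioi (0:ℝ)) ×ˢ (Ioi (0:ℝ))) :=
      Measure.prod_restrict _ _
    rw [hprod]
    filter_upwards [self_mem_ae_restrict (measurableSet_Ioi.prod measurableSet_Ioi)] with p hp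
    obtain ⟨hp1, hp2⟩ := hp
    simp only [Function.uncurry]
    rw [hg]
    simp only []
    rw [Real.rpow_def_of_pos hp1, Real.rpow_def_of_pos hp2]
  have swap : (∫⁻ x, ∫⁻ t, ENNReal.ofReal (g x t) ∂μ ∂μ)
      = ∫⁻ t, ∫⁻ x, ENNReal.ofReal (g x t) ∂μ ∂μ :=
    lintegral_lintegral_swap hgm
  -- combine
  have main : (∫⁻ x, ENNReal.ofReal (x ^ (s - 1) * rho ν x) ∂μ)
      = ENNReal.ofReal (Real.Gamma s * Real.Gamma (s + ν)) := by
    rw [← lintegral_congr_ae ((ae_restrict_iff' measurableSet_Ioi).2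
      (Filter.Eventually.of_forall step2))]
    rw [swap]
    rw [lintegral_congr_ae ((ae_restrict_iff' measurableSet_Ioi).2
      (Filter.Eventually.of_forall step3))]
    exact step4
  -- conclude
  have haesm : AEStronglyMeasurable (fun x : ℝ => x ^ (s - 1) * rho ν x) μ := by
    have hg2 : Measurable (fun x : ℝ => Real.exp (Real.log x * (s - 1)) * rho ν x) :=
      ((Real.measurable_log.mul measurable_const).exp).mul (meas_rho ν)
    refine hg2.aestronglyMeasurable.congr ?_
    filter_upwards [self_mem_ae_restrict measurableSet_Ioi] with x hx
    rw [Real.rpow_def_of_pos hx]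
  have hnn : 0 ≤ᵐ[μ] fun x : ℝ => x ^ (s - 1) * rho ν x := by
    filter_upwards [self_mem_ae_restrict measurableSet_Ioi] with x hx
    have hx0 : (0:ℝ) < x := hx
    exact mul_nonneg (Real.rpow_nonneg hx0.le _) (rho_nonneg ν x)
  have hint : IntegrableOn (fun x : ℝ => x ^ (s - 1) * rho ν x) (Ioi 0) := by
    refine ⟨haesm, ?_⟩
    rw [hasFiniteIntegral_iff_ofReal hnn, main]
    exact ENNReal.ofReal_lt_top
  refine ⟨hint, ?_⟩
  rw [integral_eq_lintegral_of_nonneg_ae hnn haesm, main, ENNReal.toReal_ofReal]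
  exact mul_nonneg (Real.Gamma_nonneg_of_nonneg hs.le)
    (Real.Gamma_nonneg_of_nonneg (by linarith))

noncomputable def Lf (ν α : ℝ) (q : Polynomial ℝ) : ℝ :=
  ∫ x in Ioi (0:ℝ), q.eval x * x ^ α * rho ν x

lemma mono_eqOn {α : ℝ} (k : ℕ) (c : ℝ) : ∀ x ∈ Ioi (0:ℝ),
    c * (x ^ (((k:ℝ) + α + 1) - 1) * rho ν x) = (monomial k c).eval x * x ^ α * rho ν x := by
  intro x hx
  have hx0 : (0:ℝ) < x := hx
  rw [eval_monomial]
  have : x ^ (((k:ℝ) + α + 1) - 1) = x ^ (k:ℕ) * x ^ α := by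
    rw [show ((k:ℝ) + α + 1) - 1 = (k:ℝ) + α by ring, Real.rpow_add hx0,
      Real.rpow_natCast]
  rw [this]; ring

lemma integrableOn_Lf {ν α : ℝ} (hν : 0 ≤ ν) (hα : -1 < α) (q : Polynomial ℝ) :
    IntegrableOn (fun x : ℝ => q.eval x * x ^ α * rho ν x) (Ioi 0) := by
  induction q using Polynomial.induction_on' with
  | add p q hp hq =>
    have : (fun x : ℝ => (p + q).eval x * x ^ α * rho ν x)
        = fun x => p.eval x * x ^ α * rho ν x + q.eval x * x ^ α * rho ν x := by
      funext x; rw [eval_add]; ring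
    rw [this]; exact hp.add hq
  | monomial k c =>
    have hs : (0:ℝ) < (k:ℝ) + α + 1 := by
      have := Nat.cast_nonneg (α := ℝ) k; linarith
    refine IntegrableOn.congr_fun ?_ (fun x hx => mono_eqOn k c x hx) measurableSet_Ioi
    exact (moment_core hν hs).1.const_mul c

lemma Lf_monomial {ν α : ℝ} (hν : 0 ≤ ν) (hα : -1 < α) (k : ℕ) (c : ℝ) :
    Lf ν α (monomial k c)
      = c * (Real.Gamma ((k:ℝ) + α + 1) * Real.Gamma ((k:ℝ) + α + 1 + ν)) := by
  have hs : (0:ℝ) < (k:ℝ) + α + 1 := by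
    have := Nat.cast_nonneg (α := ℝ) k; linarith
  have h1 : (∫ x in Ioi (0:ℝ), c * (x ^ (((k:ℝ) + α + 1) - 1) * rho ν x))
      = ∫ x in Ioi (0:ℝ), (monomial k c).eval x * x ^ α * rho ν x :=
    setIntegral_congr_fun measurableSet_Ioi (fun x hx => mono_eqOn k c x hx)
  rw [Lf, ← h1, MeasureTheory.integral_const_mul, (moment_core hν hs).2]

lemma Lf_zero (ν α : ℝ) : Lf ν α 0 = 0 := by simp [Lf]

lemma Lf_add {ν α : ℝ} (hν : 0 ≤ ν) (hα : -1 < α) (p q : Polynomial ℝ) :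
    Lf ν α (p + q) = Lf ν α p + Lf ν α q := by
  rw [Lf, Lf, Lf]
  rw [show (fun x : ℝ => (p+q).eval x * x ^ α * rho ν x) =
    (fun x : ℝ => p.eval x * x ^ α * rho ν x + q.eval x * x ^ α * rho ν x) from
    funext fun x => by rw [eval_add]; ring]
  exact integral_add (integrableOn_Lf hν hα p) (integrableOn_Lf hν hα q)

lemma Lf_Cmul {ν α : ℝ} (hν : 0 ≤ ν) (hα : -1 < α) (c : ℝ) (p : Polynomial ℝ) :
    Lf ν α (C c * p) = c * Lf ν α p := by
  rw [Lf, Lf]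
  rw [show (fun x : ℝ => (C c * p).eval x * x ^ α * rho ν x) =
    (fun x : ℝ => c * (p.eval x * x ^ α * rho ν x)) from
    funext fun x => by rw [eval_mul, eval_C]; ring]
  exact MeasureTheory.integral_const_mul c _

lemma Lf_step {ν α : ℝ} (hν : 0 ≤ ν) (hα : -1 < α) (q : Polynomial ℝ) :
    Lf (ν + 1) α q = (ν + α + 1) * Lf ν α q + Lf ν α (X * q.derivative) := by
  have hν1 : (0:ℝ) ≤ ν + 1 := by linarith
  induction q using Polynomial.induction_on' with
  | add p q hp hq =>
    rw [Lf_add hν1 hα, derivative_add, mul_add, Lf_add hν hα, Lf_add hν hα, hp, hq]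
    ring
  | monomial k c =>
    have hGa : ∀ u : ℝ, 0 < u → Real.Gamma (u + 1) = u * Real.Gamma u :=
      fun u hu => Real.Gamma_add_one hu.ne'
    have hkpos : (0:ℝ) ≤ (k:ℝ) := Nat.cast_nonneg k
    cases k with
    | zero =>
      rw [show derivative (monomial 0 c) = 0 by
        rw [derivative_monomial]; simp]
      rw [mul_zero, Lf_zero, Lf_monomial hν1 hα, Lf_monomial hν hα]
      rw [show ((0:ℕ):ℝ) + α + 1 + (ν + 1) = (((0:ℕ):ℝ) + α + 1 + ν) + 1 by ring]
      rw [Real.Gamma_add_one (s := ((0:ℕ):ℝ) + α + 1 + ν)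
        (by push_cast; intro h; linarith [h])]
      push_cast
      ring
    | succ m =>
      rw [derivative_monomial, show m + 1 - 1 = m from rfl, X_mul_monomial]
      rw [Lf_monomial hν1 hα, Lf_monomial hν hα, Lf_monomial hν hα]
      rw [show ((m+1:ℕ):ℝ) + α + 1 + (ν + 1) = (((m+1:ℕ):ℝ) + α + 1 + ν) + 1 by ring]
      have hm : (0:ℝ) ≤ (m:ℝ) := Nat.cast_nonneg m
      rw [Real.Gamma_add_one (s := ((m+1:ℕ):ℝ) + α + 1 + ν)
        (by push_cast; intro h; linarith [h])]
      push_cast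
      ring

lemma Lf_ortho {ν α : ℝ} (hν : 0 ≤ ν) (hα : -1 < α) (P : ℕ → Polynomial ℝ)
    (hdeg : ∀ n, (P n).natDegree = n)
    (horth : ∀ n m : ℕ, Lf ν α (P n * P m) = if n = m then 1 else 0) (n : ℕ) :
    ∀ d, d < n → ∀ q : Polynomial ℝ, q.natDegree ≤ d → Lf ν α (P n * q) = 0 := by
  intro d
  induction d using Nat.strong_induction_on with
  | _ d IH =>
    intro hdn q hq
    by_cases hq0 : q = 0
    · rw [hq0, mul_zero, Lf_zero]
    set e := q.natDegree with he
    have hPe : P e ≠ 0 := by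
      intro h
      have h1 := horth e e
      rw [h, zero_mul, Lf_zero, if_pos rfl] at h1
      exact zero_ne_one h1
    have hlc : (P e).leadingCoeff ≠ 0 := leadingCoeff_ne_zero.mpr hPe
    set c := q.leadingCoeff / (P e).leadingCoeff with hc
    set r := q - C c * P e with hr
    have hPecoeff : (P e).coeff e = (P e).leadingCoeff := by
      rw [Polynomial.leadingCoeff, hdeg e]
    have hrc : r.coeff e = 0 := by
      rw [hr, Polynomial.coeff_sub, Polynomial.coeff_C_mul, hPecoeff, hc,
        div_mul_cancel₀ _ hlc, he, Polynomial.coeff_natDegree, sub_self]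
    have hrd : r.natDegree ≤ e := by
      refine le_trans (Polynomial.natDegree_sub_le _ _) ?_
      simp only [max_le_iff]
      exact ⟨le_of_eq he.symm, le_trans (Polynomial.natDegree_C_mul_le _ _)
        (le_of_eq (hdeg e))⟩
    have hq_eq : q = C c * P e + r := by rw [hr]; ring
    have hsplit : Lf ν α (P n * q) = c * Lf ν α (P n * P e) + Lf ν α (P n * r) := by
      rw [hq_eq, mul_add, Lf_add hν hα, show P n * (C c * P e) = C c * (P n * P e) by ring,
        Lf_Cmul hν hα]
    have hne : Lf ν α (P n * P e) = 0 := by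
      rw [horth n e, if_neg (by omega)]
    have hr0 : Lf ν α (P n * r) = 0 := by
      by_cases hrz : r = 0
      · rw [hrz, mul_zero, Lf_zero]
      · have hlt : r.natDegree < e := by
          rcases lt_or_eq_of_le hrd with h | h
          · exact h
          · exfalso
            apply Polynomial.leadingCoeff_ne_zero.mpr hrz
            rw [Polynomial.leadingCoeff, h, hrc]
        exact IH r.natDegree (lt_of_lt_of_le hlt hq) (by omega) r le_rfl
    rw [hsplit, hne, hr0, mul_zero, add_zero]

theorem squared_norm_against_next_weight
    (ν α : ℝ) (hν : 0 ≤ ν) (hα : -1 < α) (P : ℕ → Polynomial ℝ)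
    (hdeg : ∀ n, (P n).natDegree = n)
    (horth : ∀ n m : ℕ,
      ∫ x in Ioi (0:ℝ), (P n).eval x * (P m).eval x * x ^ α * rho ν x
        = if n = m then 1 else 0) (n : ℕ) :
    ∫ x in Ioi (0:ℝ), ((P n).eval x) ^ 2 * x ^ α * rho (ν + 1) x
      = 2 * n + 1 + ν + α := by
  have horthL : ∀ n m : ℕ, Lf ν α (P n * P m) = if n = m then 1 else 0 := by
    intro n m
    rw [Lf]
    simp only [Polynomial.eval_mul]
    exact horth n m
  -- the goal integral equals Lf (ν+1) α (P n * P n)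
  have hgoal : (∫ x in Ioi (0:ℝ), ((P n).eval x) ^ 2 * x ^ α * rho (ν + 1) x)
      = Lf (ν + 1) α (P n * P n) := by
    rw [Lf]
    apply setIntegral_congr_fun measurableSet_Ioi
    intro x _
    simp only [Polynomial.eval_mul, sq]
  -- the key quantity : Lf ν α (P n * (X * (P n).derivative)) = n
  have hkey : Lf ν α (P n * (X * (P n).derivative)) = n := by
    cases n with
    | zero =>
      have h0 : P 0 = C ((P 0).coeff 0) := Polynomial.eq_C_of_natDegree_eq_zero (hdeg 0)
      rw [h0, Polynomial.derivative_C, mul_zero, mul_zero, Lf_zero]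
      simp
    | succ m =>
      set n := m + 1 with hn
      set u : Polynomial ℝ := X * (P n).derivative with hu
      set w : Polynomial ℝ := u - C (n:ℝ) * P n with hw
      have hw_eq : u = C (n:ℝ) * P n + w := by rw [hw]; ring
      have hwc : w.coeff n = 0 := by
        rw [hw, Polynomial.coeff_sub, Polynomial.coeff_C_mul, hu,
          Polynomial.coeff_X_mul, Polynomial.coeff_derivative]
        push_cast
        rw [hn]
        push_cast
        ring
      have hwd : w.natDegree ≤ n := by
        rw [hw]
        refine le_trans (Polynomial.natDegree_sub_le _ _) ?_
        simp only [max_le_iff]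
        constructor
        · rw [hu]
          refine le_trans (Polynomial.natDegree_mul_le) ?_
          have h2 := Polynomial.natDegree_derivative_le (P n)
          rw [hdeg n] at h2
          rw [Polynomial.natDegree_X]
          omega
        · exact le_trans (Polynomial.natDegree_C_mul_le _ _) (le_of_eq (hdeg n))
      have hsplit : Lf ν α (P n * u) = (n:ℝ) * Lf ν α (P n * P n) + Lf ν α (P n * w) := by
        rw [hw_eq, mul_add, Lf_add hν hα,
          show P n * (C (n:ℝ) * P n) = C (n:ℝ) * (P n * P n) by ring, Lf_Cmul hν hα]
      have hPnPn : Lf ν α (P n * P n) = 1 := by rw [horthL n n, if_pos rfl]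
      have hPnw : Lf ν α (P n * w) = 0 := by
        by_cases hwz : w = 0
        · rw [hwz, mul_zero, Lf_zero]
        · have hlt : w.natDegree < n := by
            rcases lt_or_eq_of_le hwd with h | h
            · exact h
            · exfalso
              apply Polynomial.leadingCoeff_ne_zero.mpr hwz
              rw [Polynomial.leadingCoeff, h, hwc]
          exact Lf_ortho hν hα P hdeg horthL n w.natDegree hlt w le_rfl
      rw [hsplit, hPnPn, hPnw, mul_one, add_zero]
  have hderiv : X * ((P n * P n).derivative) = P n * (X * (P n).derivative) + P n * (X * (P n).derivative) := by
    rw [Polynomial.derivative_mul]; ring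
  rw [hgoal, Lf_step hν hα, horthL n n, if_pos rfl, hderiv, Lf_add hν hα, hkey]
  push_cast
  ring
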